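/- In a COM (U, L), for any two covectors X and Y: (i) the distance between the faces F(X) and F(Y) in the tope graph equals |S(X,Y)|, the size of the separator; (ii) the metric projection of F(X) onto F(Y) is the face F(Y∘X), and the metric projection of F(Y) onto F(X) is F(X∘Y). -/

import Mathlib

open Finset
open scoped Classical

variable {U : Type*}

/-- Hamming distance between two vertices of the hypercube `U → Bool`. -/
def hDist [Fintype U] [DecidableEq U] (x y : U → Bool) : ℕ :=
  (Finset.univ.filter fun i => x i ≠ y i).card

/-- The hypercube graph on `U → Bool`: two vertices are adjacent iff they differ
in exactly one coordinate. -/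
def cubeGraph (U : Type*) [Fintype U] [DecidableEq U] : SimpleGraph (U → Bool) where
  Adj x y := hDist x y = 1
  symm := by
    refine ⟨?_⟩
    intro x y h
    have hs : (Finset.univ.filter fun i => y i ≠ x i) =
        (Finset.univ.filter fun i => x i ≠ y i) := by
      apply Finset.filter_congr
      intro i _
      exact ne_comm
    simpa [hDist, hs] using h
  loopless := by
    refine ⟨?_⟩
    intro x h
    simp [hDist] at h

/-- Distance between `x` and `y` inside the subgraph of the hypercube induced by `A`
(`0` if one of them is not in `A`). -/
noncomputable def dIn [Fintype U] [DecidableEq U] (A : Set (U → Bool)) (x y : U → Bool) : ℕ :=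
  if h : x ∈ A ∧ y ∈ A then ((cubeGraph U).induce A).dist ⟨x, h.1⟩ ⟨y, h.2⟩ else 0

/-- A set of vertices of the hypercube is a partial cube if its induced graph is connected
and the induced graph distance coincides with the Hamming distance
(i.e. it is an isometric subgraph of the hypercube). -/
def IsPartialCube [Fintype U] [DecidableEq U] (A : Set (U → Bool)) : Prop :=
  ((cubeGraph U).induce A).Connected ∧ ∀ x ∈ A, ∀ y ∈ A, dIn A x y = hDist x y

/-- `A` shatters the coordinate set `X`. -/
def Shatters [Fintype U] [DecidableEq U] (A : Set (U → Bool)) (X : Finset U) : Prop :=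
  ∀ g : U → Bool, ∃ a ∈ A, ∀ i ∈ X, a i = g i

/-- `A` strongly shatters `X`: it contains a full subcube over the coordinates `X`. -/
def StronglyShatters [Fintype U] [DecidableEq U] (A : Set (U → Bool)) (X : Finset U) : Prop :=
  ∃ a : U → Bool, ∀ g : U → Bool, (fun i => if i ∈ X then g i else a i) ∈ A

/-- An ample set family: every shattered set is strongly shattered. -/
def IsAmple [Fintype U] [DecidableEq U] (A : Set (U → Bool)) : Prop :=
  ∀ X : Finset U, Shatters A X → StronglyShatters A X

/-- Composition of sign vectors: `(X ∘ Y) e = X e` if `X e ≠ 0`, else `Y e`. -/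
def comp (X Y : U → SignType) : U → SignType := fun e => if X e = 0 then Y e else X e

/-- The support of a sign vector. -/
def supp (X : U → SignType) : Set U := {e | X e ≠ 0}

/-- The separator of two sign vectors. -/
def sep [Fintype U] [DecidableEq U] (X Y : U → SignType) : Finset U :=
  Finset.univ.filter fun e => X e * Y e = -1

/-- A complex of oriented matroids: face symmetry and strong elimination. -/
structure IsCOM (L : Set (U → SignType)) : Prop where
  fs : ∀ X ∈ L, ∀ Y ∈ L, comp X (-Y) ∈ L
  se : ∀ X ∈ L, ∀ Y ∈ L, ∀ e : U, X e * Y e = -1 →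
      ∃ Z ∈ L, Z e = 0 ∧ ∀ f : U, X f * Y f ≠ -1 → Z f = comp X Y f

/-- An oriented matroid: composition, strong elimination and symmetry. -/
structure IsOM (L : Set (U → SignType)) : Prop where
  c : ∀ X ∈ L, ∀ Y ∈ L, comp X Y ∈ L
  se : ∀ X ∈ L, ∀ Y ∈ L, ∀ e : U, X e * Y e = -1 →
      ∃ Z ∈ L, Z e = 0 ∧ ∀ f : U, X f * Y f ≠ -1 → Z f = comp X Y f
  sym : ∀ X ∈ L, -X ∈ L

/-- A simple system of sign vectors. -/
def SimpleSV (L : Set (U → SignType)) : Prop :=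
  (∀ e : U, ∀ s : SignType, ∃ X ∈ L, X e = s) ∧
  ∀ e f : U, e ≠ f → (∃ X ∈ L, X e * X f = 1) ∧ (∃ Y ∈ L, Y e * Y f = -1)

/-- The topes of a system of sign vectors: the covectors with full support. -/
def Topes (L : Set (U → SignType)) : Set (U → SignType) := {X ∈ L | ∀ e, X e ≠ 0}

/-- Conversion of a (full support) sign vector to a vertex of the hypercube. -/
def tb (X : U → SignType) : U → Bool := fun e => decide (X e = 1)

/-- The vertex set of the tope graph inside the hypercube. -/
def TopeSet (L : Set (U → SignType)) : Set (U → Bool) := tb '' Topes L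

/-- The face of a covector `X`. -/
def face (L : Set (U → SignType)) (X : U → SignType) : Set (U → SignType) :=
  {Z | ∃ Y ∈ L, Z = comp X Y}

/-- The topes of the face `F(X)`: the topes of `L` lying in the cube `C(X)`, i.e. agreeing
with `X` on the support of `X`. -/
def faceTopes (L : Set (U → SignType)) (X : U → SignType) : Set (U → SignType) :=
  {Z ∈ Topes L | ∀ e, X e ≠ 0 → Z e = X e}

/-- The distance between the faces `F(X)` and `F(Y)` in the tope graph. -/
noncomputable def faceDist [Fintype U] [DecidableEq U]
    (L : Set (U → SignType)) (X Y : U → SignType) : ℕ :=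
  sInf {n | ∃ A ∈ faceTopes L X, ∃ B ∈ faceTopes L Y, dIn (TopeSet L) (tb A) (tb B) = n}

lemma st_ne_of_mul (a b : SignType) (h : a * b = -1) : a ≠ 0 ∧ b ≠ 0 := by
  revert h; revert a b; decide
lemma st_eq (a b : SignType) (ha : a ≠ 0) (hb : b ≠ 0) (h : a * b ≠ -1) : a = b := by
  revert ha hb h; revert a b; decide
lemma st_neg (a b : SignType) (h : a * b = -1) : b = -a := by revert h; revert a b; decide
lemma st_self' (a : SignType) (ha : a ≠ 0) : a * a ≠ -1 := by revert ha; revert a; decide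
lemma st_mneg (a : SignType) (ha : a ≠ 0) : a * (-a) = -1 := by revert ha; revert a; decide
lemma st_tb (a b : SignType) (ha : a ≠ 0) (hb : b ≠ 0) :
    ((decide (a = 1) : Bool) ≠ decide (b = 1)) ↔ a * b = -1 := by
  revert ha hb; revert a b; decide
lemma st_four (a b c d : SignType) (ha : a ≠ 0) (hb : b ≠ 0) (hc : c ≠ 0) (hd : d ≠ 0)
    (h : a * b = -(c * d)) : (a = c ∧ b = -d) ∨ (a = -c ∧ b = d) := by
  revert ha hb hc hd h; revert a b c d; decide

variable {L : Set (U → SignType)}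

lemma comp_mem (h : IsCOM L) {X Y : U → SignType} (hX : X ∈ L) (hY : Y ∈ L) :
    comp X Y ∈ L := by
  have h2 := h.fs X hX _ (h.fs X hX Y hY)
  have : comp X (-(comp X (-Y))) = comp X Y := by
    funext e
    simp only [comp, Pi.neg_apply]
    by_cases hx : X e = 0 <;> simp [hx]
  rwa [this] at h2

lemma tope_comp (h : IsCOM L) {X T : U → SignType} (hX : X ∈ L) (hT : T ∈ Topes L) :
    comp X T ∈ Topes L := by
  refine ⟨comp_mem h hX hT.1, fun e => ?_⟩
  simp only [comp]
  split
  · exact hT.2 e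
  · assumption

lemma mem_sep [Fintype U] [DecidableEq U] {X Y : U → SignType} {e : U} :
    e ∈ sep X Y ↔ X e * Y e = -1 := by simp [sep]

lemma sep_comm [Fintype U] [DecidableEq U] (X Y : U → SignType) : sep X Y = sep Y X := by
  unfold sep; congr 1; funext e; rw [mul_comm]

lemma topes_eq_of_sep_empty [Fintype U] [DecidableEq U] {A B : U → SignType}
    (hA : A ∈ Topes L) (hB : B ∈ Topes L) (h : sep A B = ∅) : A = B := by
  funext e
  refine st_eq _ _ (hA.2 e) (hB.2 e) ?_
  intro hc
  exact absurd (mem_sep.2 hc) (by simp [h])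

lemma sep_nonempty_of_ne [Fintype U] [DecidableEq U] {A B : U → SignType}
    (hA : A ∈ Topes L) (hB : B ∈ Topes L) (h : A ≠ B) : (sep A B).Nonempty := by
  rcases (sep A B).eq_empty_or_nonempty with he | hn
  · exact absurd (topes_eq_of_sep_empty hA hB he) h
  · exact hn

lemma hDist_tb [Fintype U] [DecidableEq U] {A B : U → SignType}
    (hA : A ∈ Topes L) (hB : B ∈ Topes L) : hDist (tb A) (tb B) = (sep A B).card := by
  unfold hDist sep
  congr 1
  apply Finset.filter_congr
  intro e _
  exact st_tb (A e) (B e) (hA.2 e) (hB.2 e)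

lemma exists_tope_aux [Fintype U] [DecidableEq U] (h : IsCOM L) (hs : SimpleSV L) :
    ∀ n (X : U → SignType), X ∈ L → (univ.filter fun e => X e = 0).card ≤ n →
    ∃ T ∈ Topes L, ∀ e, X e ≠ 0 → T e = X e := by
  intro n
  induction n with
  | zero =>
    intro X hX hc
    refine ⟨X, ⟨hX, fun e he => ?_⟩, fun e _ => rfl⟩
    have : (univ.filter fun e => X e = 0) = ∅ := Finset.card_eq_zero.1 (Nat.le_zero.1 hc)
    have := Finset.eq_empty_iff_forall_notMem.1 this e
    simp only [Finset.mem_filter, Finset.mem_univ, true_and] at this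
    exact this he
  | succ n ih =>
    intro X hX hc
    by_cases hz : ∃ e, X e = 0
    · obtain ⟨e, he⟩ := hz
      obtain ⟨W, hW, hWe⟩ := hs.1 e 1
      have hX' : comp X W ∈ L := comp_mem h hX hW
      have hcc : ∀ f, comp X W f ≠ 0 → X f ≠ 0 → comp X W f = X f := by
        intro f _ hf; simp [comp, hf]
      have hXne : ∀ f, X f ≠ 0 → comp X W f ≠ 0 := by
        intro f hf; simp [comp, hf]
      have hsub : (univ.filter fun f => comp X W f = 0) ⊆
          (univ.filter fun f => X f = 0).erase e := by
        intro f hf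
        simp only [Finset.mem_filter, Finset.mem_univ, true_and] at hf
        simp only [comp] at hf
        rcases (em (X f = 0)) with h0 | h0
        · rw [if_pos h0] at hf
          refine Finset.mem_erase.2 ⟨?_, by simp [h0]⟩
          rintro rfl
          rw [hWe] at hf; exact one_ne_zero hf
        · rw [if_neg h0] at hf; exact absurd hf h0
      have hce : e ∈ (univ.filter fun f => X f = 0) := by simp [he]
      have hcard : (univ.filter fun f => comp X W f = 0).card ≤ n := by
        calc (univ.filter fun f => comp X W f = 0).card
            ≤ ((univ.filter fun f => X f = 0).erase e).card := Finset.card_le_card hsub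
          _ = (univ.filter fun f => X f = 0).card - 1 := Finset.card_erase_of_mem hce
          _ ≤ n := by omega
      obtain ⟨T, hT, hTe⟩ := ih (comp X W) hX' hcard
      exact ⟨T, hT, fun f hf => (hTe f (hXne f hf)).trans (hcc f (hXne f hf) hf)⟩
    · push_neg at hz
      exact ⟨X, ⟨hX, hz⟩, fun e _ => rfl⟩

lemma exists_tope [Fintype U] [DecidableEq U] (h : IsCOM L) (hs : SimpleSV L)
    (X : U → SignType) (hX : X ∈ L) : ∃ T ∈ Topes L, ∀ e, X e ≠ 0 → T e = X e :=
  exists_tope_aux h hs _ X hX le_rfl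

lemma st_negne (a : SignType) (ha : a ≠ 0) : -a ≠ 0 := by revert ha; revert a; decide
lemma st_ne_of_mul_one (a b : SignType) (h : a * b = 1) : a ≠ 0 ∧ b ≠ 0 := by
  revert h; revert a b; decide

lemma st_pm (a b : SignType) (ha : a ≠ 0) (hb : b ≠ 0) : a * b = 1 ∨ a * b = -1 := by
  revert ha hb; revert a b; decide

lemma exists_adj_tope [Fintype U] [DecidableEq U] (h : IsCOM L) (hs : SimpleSV L)
    {T T' : U → SignType} (hT : T ∈ Topes L) (hT' : T' ∈ Topes L) (hne : T ≠ T') :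
    ∃ T₁ ∈ Topes L, sep T T₁ ⊆ sep T T' ∧ (sep T T₁).card = 1 := by
  classical
  set N : Set ℕ := {k | ∃ W, (W ∈ Topes L ∧ W ≠ T ∧ sep T W ⊆ sep T T') ∧ (sep T W).card = k}
    with hNdef
  have hNne : N.Nonempty := ⟨(sep T T').card, T', ⟨hT', Ne.symm hne, subset_rfl⟩, rfl⟩
  obtain ⟨T'', ⟨hT''t, hT''ne, hT''sub⟩, hm⟩ := Nat.sInf_mem hNne
  have hmin : ∀ W, W ∈ Topes L → W ≠ T → sep T W ⊆ sep T T' →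
      (sep T T'').card ≤ (sep T W).card :=
    fun W hW hWne hWs => hm.le.trans (Nat.sInf_le ⟨W, ⟨hW, hWne, hWs⟩, rfl⟩)
  have hm1 : 1 ≤ (sep T T'').card :=
    Finset.card_pos.2 (sep_nonempty_of_ne hT hT''t (Ne.symm hT''ne))
  have key : ∀ g ∈ sep T T'', ∀ W, W ∈ Topes L → W ≠ T →
      sep T W ⊆ (sep T T'').erase g → False := by
    intro g hg W hW hWne hWs
    have h1 : (sep T T'').card ≤ (sep T W).card :=
      hmin W hW hWne (hWs.trans ((Finset.erase_subset _ _).trans hT''sub))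
    have h2 : (sep T W).card ≤ (sep T T'').card - 1 := by
      calc (sep T W).card ≤ ((sep T T'').erase g).card := Finset.card_le_card hWs
        _ = (sep T T'').card - 1 := Finset.card_erase_of_mem hg
    omega
  have hmeq : (sep T T'').card = 1 := by
    by_contra hm2'
    have hm2 : 2 ≤ (sep T T'').card := by omega
    obtain ⟨e, he⟩ := sep_nonempty_of_ne hT hT''t (Ne.symm hT''ne)
    have hee : T e * T'' e = -1 := mem_sep.1 he
    obtain ⟨Z, hZL, hZe, hZf⟩ := h.se T hT.1 T'' hT''t.1 e hee
    have hZoff : ∀ f, f ∉ sep T T'' → Z f = T f := by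
      intro f hf
      have hnf : T f * T'' f ≠ -1 := fun hc => hf (mem_sep.2 hc)
      rw [hZf f hnf]; simp [comp, hT.2 f]
    set T₂ := comp Z (-T'') with hT₂def
    have hT₂t : T₂ ∈ Topes L := by
      refine ⟨h.fs Z hZL T'' hT''t.1, fun f => ?_⟩
      simp only [hT₂def, comp, Pi.neg_apply]
      split
      · exact st_negne _ (hT''t.2 f)
      · assumption
    have hT₂eq : ∀ f, f ∉ sep T T'' → T₂ f = T f := by
      intro f hf
      simp [hT₂def, comp, hZoff f hf, hT.2 f]
    have hT₂zero : ∀ f ∈ sep T T'', Z f = 0 → T₂ f = T f := by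
      intro f hf hz
      have hnn : T'' f = -T f := st_neg _ _ (mem_sep.1 hf)
      simp [hT₂def, comp, hz, hnn]
    by_cases hbc : T₂ = T
    · have hZfull : ∀ f, Z f ≠ 0 → Z f = T f := by
        intro f hzf
        have hcf := congrFun hbc f
        simpa [hT₂def, comp, hzf] using hcf
      set T₁ := comp Z (-T) with hT₁def
      have hT₁t : T₁ ∈ Topes L := by
        refine ⟨h.fs Z hZL T hT.1, fun f => ?_⟩
        simp only [hT₁def, comp, Pi.neg_apply]
        split
        · exact st_negne _ (hT.2 f)
        · assumption
      have hT₁sub : sep T T₁ ⊆ (sep T T'').filter fun f => Z f = 0 := by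
        intro f hf
        have hf' := mem_sep.1 hf
        by_cases hz : Z f = 0
        · refine Finset.mem_filter.2 ⟨?_, hz⟩
          by_contra hmem
          have hTf : T₁ f = T f := by simp [hT₁def, comp, hZoff f hmem, hT.2 f]
          rw [hTf] at hf'
          exact st_self' _ (hT.2 f) hf'
        · have hTf : T₁ f = T f := by simp [hT₁def, comp, hz, hZfull f hz]
          rw [hTf] at hf'
          exact (st_self' _ (hT.2 f) hf').elim
      have hT₁e : T₁ e = -T e := by simp [hT₁def, comp, hZe]
      have heT₁ : e ∈ sep T T₁ := mem_sep.2 (by rw [hT₁e]; exact st_mneg _ (hT.2 e))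
      have hT₁ne : T₁ ≠ T := by
        intro heq
        rw [heq] at heT₁
        exact st_self' _ (hT.2 e) (mem_sep.1 heT₁)
      have hmle : (sep T T'').card ≤ (sep T T₁).card :=
        hmin T₁ hT₁t hT₁ne (hT₁sub.trans ((Finset.filter_subset _ _).trans hT''sub))
      have hS0 : ((sep T T'').filter fun f => Z f = 0) = sep T T'' := by
        apply Finset.eq_of_subset_of_card_le (Finset.filter_subset _ _)
        exact hmle.trans (Finset.card_le_card hT₁sub)
      have hZ0 : ∀ f ∈ sep T T'', Z f = 0 := by
        intro f hf
        rw [← hS0] at hf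
        exact (Finset.mem_filter.1 hf).2
      obtain ⟨f', hf'⟩ : ∃ f', f' ∈ (sep T T'').erase e := by
        apply Finset.card_pos.1
        rw [Finset.card_erase_of_mem he]
        omega
      have hf'e : f' ≠ e := (Finset.mem_erase.1 hf').1
      have hf'mem : f' ∈ sep T T'' := (Finset.mem_erase.1 hf').2
      obtain ⟨V, hVL, hVp⟩ : ∃ V ∈ L, V e * V f' = -(T e * T f') := by
        obtain ⟨⟨W1, hW1, hW1p⟩, W2, hW2, hW2p⟩ := hs.2 e f' (Ne.symm hf'e)
        rcases st_pm (T e) (T f') (hT.2 e) (hT.2 f') with hp | hp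
        · exact ⟨W2, hW2, by rw [hW2p, hp]⟩
        · exact ⟨W1, hW1, by rw [hW1p, hp]; decide⟩
      have hVnz : V e ≠ 0 ∧ V f' ≠ 0 := by
        rcases st_pm (T e) (T f') (hT.2 e) (hT.2 f') with hp | hp <;> rw [hp] at hVp
        · exact st_ne_of_mul _ _ hVp
        · rw [neg_neg] at hVp
          exact st_ne_of_mul_one _ _ hVp
      set T₃ := comp Z (comp V T) with hT₃def
      have hT₃t : T₃ ∈ Topes L := by
        refine ⟨comp_mem h hZL (comp_mem h hVL hT.1), fun f => ?_⟩
        simp only [hT₃def, comp]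
        split
        · split
          · exact hT.2 f
          · assumption
        · assumption
      have hT₃off : ∀ f, f ∉ sep T T'' → T₃ f = T f := by
        intro f hf
        simp [hT₃def, comp, hZoff f hf, hT.2 f]
      have hT₃on : ∀ f, f ∈ sep T T'' → V f ≠ 0 → T₃ f = V f := by
        intro f hf hv
        simp [hT₃def, comp, hZ0 f hf, hv]
      have hsubT₃ : ∀ g, T₃ g ≠ T g → g ∈ sep T T'' := by
        intro g hg
        by_contra hgm
        exact hg (hT₃off g hgm)
      rcases st_four (V e) (V f') (T e) (T f') hVnz.1 hVnz.2 (hT.2 e) (hT.2 f') hVp with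
        ⟨h1, h2⟩ | ⟨h1, h2⟩
      · -- V e = T e, V f' = -T f' : f' ∈ sep T T₃, e ∉ sep T T₃
        have hmem : f' ∈ sep T T₃ := by
          refine mem_sep.2 ?_
          rw [hT₃on f' hf'mem hVnz.2, h2]
          exact st_mneg _ (hT.2 f')
        have hT₃ne : T₃ ≠ T := by
          intro heq; rw [heq] at hmem
          exact st_self' _ (hT.2 f') (mem_sep.1 hmem)
        refine key e he T₃ hT₃t hT₃ne ?_
        intro g hg
        have hgm := mem_sep.1 hg
        have hgT'' : g ∈ sep T T'' := by
          apply hsubT₃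
          intro hgeq; rw [hgeq] at hgm
          exact st_self' _ (hT.2 g) hgm
        refine Finset.mem_erase.2 ⟨?_, hgT''⟩
        rintro rfl
        rw [hT₃on g hgT'' hVnz.1, h1] at hgm
        exact st_self' _ (hT.2 g) hgm
      · -- V e = -T e, V f' = T f' : e ∈ sep T T₃, f' ∉ sep T T₃
        have hmem : e ∈ sep T T₃ := by
          refine mem_sep.2 ?_
          rw [hT₃on e he hVnz.1, h1]
          exact st_mneg _ (hT.2 e)
        have hT₃ne : T₃ ≠ T := by
          intro heq; rw [heq] at hmem
          exact st_self' _ (hT.2 e) (mem_sep.1 hmem)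
        refine key f' hf'mem T₃ hT₃t hT₃ne ?_
        intro g hg
        have hgm := mem_sep.1 hg
        have hgT'' : g ∈ sep T T'' := by
          apply hsubT₃
          intro hgeq; rw [hgeq] at hgm
          exact st_self' _ (hT.2 g) hgm
        refine Finset.mem_erase.2 ⟨?_, hgT''⟩
        rintro rfl
        rw [hT₃on g hgT'' hVnz.2, h2] at hgm
        exact st_self' _ (hT.2 g) hgm
    · -- good case: T₂ ≠ T
      refine key e he T₂ hT₂t hbc ?_
      intro f hf
      have hf'' := mem_sep.1 hf
      have hfT'' : f ∈ sep T T'' := by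
        by_contra hmem
        rw [hT₂eq f hmem] at hf''
        exact st_self' _ (hT.2 f) hf''
      refine Finset.mem_erase.2 ⟨?_, hfT''⟩
      rintro rfl
      rw [hT₂zero f hfT'' hZe] at hf''
      exact st_self' _ (hT.2 f) hf''
  exact ⟨T'', hT''t, hT''sub, hmeq⟩

lemma faceTopes_comp [Fintype U] [DecidableEq U] (h : IsCOM L) {X W : U → SignType}
    (hX : X ∈ L) (hW : W ∈ Topes L) : comp X W ∈ faceTopes L X :=
  ⟨tope_comp h hX hW, fun e he => by simp [comp, he]⟩

lemma sep_subset_faceTopes [Fintype U] [DecidableEq U] {X Y A B : U → SignType}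
    (hA : A ∈ faceTopes L X) (hB : B ∈ faceTopes L Y) : sep X Y ⊆ sep A B := by
  intro e he
  have h2 := mem_sep.1 he
  have hnz := st_ne_of_mul _ _ h2
  rw [mem_sep, hA.2 e hnz.1, hB.2 e hnz.2]
  exact h2

lemma hDist_triangle [Fintype U] [DecidableEq U] (x y z : U → Bool) :
    hDist x z ≤ hDist x y + hDist y z := by
  unfold hDist
  calc (Finset.univ.filter fun i => x i ≠ z i).card
      ≤ ((Finset.univ.filter fun i => x i ≠ y i) ∪
          (Finset.univ.filter fun i => y i ≠ z i)).card := by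
        apply Finset.card_le_card
        intro i hi
        simp only [Finset.mem_filter, Finset.mem_univ, true_and] at hi
        simp only [Finset.mem_union, Finset.mem_filter, Finset.mem_univ, true_and]
        by_cases hxy : x i = y i
        · right; rw [← hxy]; exact hi
        · left; exact hxy
    _ ≤ _ := Finset.card_union_le _ _

lemma walk_hDist_le [Fintype U] [DecidableEq U] {A : Set (U → Bool)} :
    ∀ {x y : A} (p : ((cubeGraph U).induce A).Walk x y), hDist x.1 y.1 ≤ p.length := by
  intro x y p
  induction p with
  | nil => simp [hDist]
  | @cons u v w h q ih =>
    have hadj : hDist u.1 v.1 = 1 := h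
    calc hDist u.1 w.1 ≤ hDist u.1 v.1 + hDist v.1 w.1 := hDist_triangle _ _ _
      _ ≤ 1 + q.length := by rw [hadj]; omega
      _ = (SimpleGraph.Walk.cons h q).length := by simp [SimpleGraph.Walk.length_cons]; omega

lemma exists_tope_walk [Fintype U] [DecidableEq U] (h : IsCOM L) (hs : SimpleSV L) :
    ∀ n (T T' : U → SignType) (hT : T ∈ Topes L) (hT' : T' ∈ Topes L),
      (sep T T').card = n →
      ∃ p : ((cubeGraph U).induce (TopeSet L)).Walk ⟨tb T, ⟨T, hT, rfl⟩⟩ ⟨tb T', ⟨T', hT', rfl⟩⟩,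
        p.length = n := by
  intro n
  induction n using Nat.strong_induction_on with
  | _ n ih =>
    intro T T' hT hT' hcard
    rcases eq_or_ne T T' with rfl | hne
    · have hsepself : sep T T = ∅ := by
        refine Finset.eq_empty_iff_forall_notMem.2 fun f hf => ?_
        exact st_self' _ (hT.2 f) (mem_sep.1 hf)
      rw [hsepself, Finset.card_empty] at hcard
      exact ⟨SimpleGraph.Walk.nil, by simp [← hcard]⟩
    · obtain ⟨T₁, hT₁t, hsub, hcard1⟩ := exists_adj_tope h hs hT hT' hne
      obtain ⟨e, he⟩ := Finset.card_eq_one.1 hcard1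
      have heq : ∀ f, f ≠ e → T₁ f = T f := by
        intro f hf
        have hnm : f ∉ sep T T₁ := by rw [he]; simp [hf]
        exact (st_eq _ _ (hT.2 f) (hT₁t.2 f) fun hc => hnm (mem_sep.2 hc)).symm
      have heE : T₁ e = -T e :=
        st_neg _ _ (mem_sep.1 (by rw [he]; exact Finset.mem_singleton_self e))
      have heS : e ∈ sep T T' := hsub (by rw [he]; exact Finset.mem_singleton_self e)
      have hsep' : sep T₁ T' = (sep T T').erase e := by
        ext f
        rcases eq_or_ne f e with rfl | hf
        · simp only [Finset.mem_erase, ne_eq, not_true_eq_false, false_and, iff_false]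
          intro hmem
          have hT'e : T' f = -T f := st_neg _ _ (mem_sep.1 heS)
          have hx := mem_sep.1 hmem
          rw [heE, hT'e] at hx
          exact st_self' _ (st_negne _ (hT.2 f)) hx
        · simp only [Finset.mem_erase, ne_eq, hf, not_false_eq_true, true_and]
          rw [mem_sep, mem_sep, heq f hf]
      have hcard' : (sep T₁ T').card = n - 1 := by
        rw [hsep', Finset.card_erase_of_mem heS, hcard]
      have hpos : 0 < n := by
        rw [← hcard]; exact Finset.card_pos.2 ⟨e, heS⟩
      obtain ⟨p, hp⟩ := ih (n - 1) (by omega) T₁ T' hT₁t hT' hcard'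
      have hadj : ((cubeGraph U).induce (TopeSet L)).Adj
          ⟨tb T, ⟨T, hT, rfl⟩⟩ ⟨tb T₁, ⟨T₁, hT₁t, rfl⟩⟩ := by
        show hDist (tb T) (tb T₁) = 1
        rw [hDist_tb hT hT₁t, hcard1]
      refine ⟨SimpleGraph.Walk.cons hadj p, ?_⟩
      rw [SimpleGraph.Walk.length_cons, hp]
      omega

lemma dIn_topes [Fintype U] [DecidableEq U] (h : IsCOM L) (hs : SimpleSV L)
    {A B : U → SignType} (hA : A ∈ Topes L) (hB : B ∈ Topes L) :
    dIn (TopeSet L) (tb A) (tb B) = (sep A B).card := by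
  have hmA : tb A ∈ TopeSet L := ⟨A, hA, rfl⟩
  have hmB : tb B ∈ TopeSet L := ⟨B, hB, rfl⟩
  rw [dIn, dif_pos (⟨hmA, hmB⟩ : tb A ∈ TopeSet L ∧ tb B ∈ TopeSet L)]
  obtain ⟨p, hp⟩ := exists_tope_walk h hs _ A B hA hB rfl
  apply le_antisymm
  · have hle := SimpleGraph.dist_le p
    rw [hp] at hle
    exact hle
  · have hr : ((cubeGraph U).induce (TopeSet L)).Reachable
        ⟨tb A, hmA⟩ ⟨tb B, hmB⟩ := ⟨p⟩
    obtain ⟨q, hq⟩ := hr.exists_walk_length_eq_dist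
    calc (sep A B).card = hDist (tb A) (tb B) := (hDist_tb hA hB).symm
      _ ≤ q.length := walk_hDist_le q
      _ = _ := hq

/-- In a (simple) COM, (i) the distance between the faces `F(X)` and
`F(Y)` in the tope graph equals `|S(X,Y)|`; (ii) the metric projection of `F(X)` onto
`F(Y)` is the face `F(Y∘X)`, and the metric projection of `F(Y)` onto `F(X)` is
`F(X∘Y)`. -/
theorem stmt12 [Fintype U] [DecidableEq U] (L : Set (U → SignType))
    (hcom : IsCOM L) (hsimple : SimpleSV L) (hne : L.Nonempty)
    (X : U → SignType) (hX : X ∈ L) (Y : U → SignType) (hY : Y ∈ L) :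
    faceDist L X Y = (sep X Y).card ∧
    (∀ B ∈ Topes L,
      ((B ∈ faceTopes L Y ∧ ∃ A ∈ faceTopes L X,
          dIn (TopeSet L) (tb A) (tb B) = faceDist L X Y) ↔
        B ∈ faceTopes L (comp Y X))) ∧
    (∀ A ∈ Topes L,
      ((A ∈ faceTopes L X ∧ ∃ B ∈ faceTopes L Y,
          dIn (TopeSet L) (tb A) (tb B) = faceDist L X Y) ↔
        A ∈ faceTopes L (comp X Y))) := by
  classical
  obtain ⟨T, hTt, -⟩ := exists_tope hcom hsimple X hX
  have hA₀ : comp X (comp Y T) ∈ faceTopes L X :=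
    faceTopes_comp hcom hX (tope_comp hcom hY hTt)
  have hB₀ : comp Y (comp X T) ∈ faceTopes L Y :=
    faceTopes_comp hcom hY (tope_comp hcom hX hTt)
  have hsep₀ : sep (comp X (comp Y T)) (comp Y (comp X T)) = sep X Y := by
    ext e
    by_cases hx : X e = 0 <;> by_cases hy : Y e = 0
    · have l1 : comp X (comp Y T) e = T e := by simp [comp, hx, hy]
      have l2 : comp Y (comp X T) e = T e := by simp [comp, hx, hy]
      rw [mem_sep, mem_sep, l1, l2, hx, zero_mul]
      exact ⟨fun hc => absurd hc (st_self' _ (hTt.2 e)), fun hc => absurd hc (by decide)⟩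
    · have l1 : comp X (comp Y T) e = Y e := by simp [comp, hx, hy]
      have l2 : comp Y (comp X T) e = Y e := by simp [comp, hx, hy]
      rw [mem_sep, mem_sep, l1, l2, hx, zero_mul]
      exact ⟨fun hc => absurd hc (st_self' _ hy), fun hc => absurd hc (by decide)⟩
    · have l1 : comp X (comp Y T) e = X e := by simp [comp, hx, hy]
      have l2 : comp Y (comp X T) e = X e := by simp [comp, hx, hy]
      rw [mem_sep, mem_sep, l1, l2, hy, mul_zero]
      exact ⟨fun hc => absurd hc (st_self' _ hx), fun hc => absurd hc (by decide)⟩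
    · have l1 : comp X (comp Y T) e = X e := by simp [comp, hx, hy]
      have l2 : comp Y (comp X T) e = Y e := by simp [comp, hx, hy]
      rw [mem_sep, mem_sep, l1, l2]
  have hmemD : (sep X Y).card ∈
      {n | ∃ A ∈ faceTopes L X, ∃ B ∈ faceTopes L Y, dIn (TopeSet L) (tb A) (tb B) = n} :=
    ⟨_, hA₀, _, hB₀, by rw [dIn_topes hcom hsimple hA₀.1 hB₀.1, hsep₀]⟩
  have hlb : ∀ n ∈
      {n | ∃ A ∈ faceTopes L X, ∃ B ∈ faceTopes L Y, dIn (TopeSet L) (tb A) (tb B) = n},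
      (sep X Y).card ≤ n := by
    rintro n ⟨A, hA, B, hB, rfl⟩
    rw [dIn_topes hcom hsimple hA.1 hB.1]
    exact Finset.card_le_card (sep_subset_faceTopes hA hB)
  have hfd : faceDist L X Y = (sep X Y).card := by
    unfold faceDist
    exact le_antisymm (Nat.sInf_le hmemD) (le_csInf ⟨_, hmemD⟩ hlb)
  refine ⟨hfd, fun B hB => ⟨?_, ?_⟩, fun A hA => ⟨?_, ?_⟩⟩
  · -- (ii) forward
    rintro ⟨hBY, A, hA, hd⟩
    rw [hfd, dIn_topes hcom hsimple hA.1 hB] at hd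
    have hseq : sep A B = sep X Y :=
      (Finset.eq_of_subset_of_card_le (sep_subset_faceTopes hA hBY) hd.le).symm
    refine ⟨hB, fun e he => ?_⟩
    by_cases hy : Y e = 0
    · have hx : X e ≠ 0 := by
        rw [comp, if_pos hy] at he; exact he
      have hnot : e ∉ sep A B := by
        rw [hseq, mem_sep, hy, mul_zero]; decide
      have hAB : A e = B e :=
        st_eq _ _ (hA.1.2 e) (hB.2 e) fun hc => hnot (mem_sep.2 hc)
      rw [comp, if_pos hy, ← hAB]
      exact hA.2 e hx
    · rw [comp, if_neg hy]
      exact hBY.2 e hy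
  · -- (ii) backward
    intro hB'
    have hBY : B ∈ faceTopes L Y := by
      refine ⟨hB, fun e hy => ?_⟩
      have hc := hB'.2 e (by rw [comp, if_neg hy]; exact hy)
      rwa [comp, if_neg hy] at hc
    refine ⟨hBY, comp X B, faceTopes_comp hcom hX hB, ?_⟩
    rw [hfd, dIn_topes hcom hsimple (faceTopes_comp hcom hX hB).1 hB]
    congr 1
    ext e
    simp only [mem_sep, comp]
    by_cases hx : X e = 0
    · simp only [if_pos hx, hx, zero_mul]
      constructor
      · intro hc; exact absurd hc (st_self' _ (hB.2 e))
      · intro hc; exact absurd hc (by decide)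
    · simp only [if_neg hx]
      by_cases hy : Y e = 0
      · have hBe : B e = X e := by
          have hc := hB'.2 e (by rw [comp, if_pos hy]; exact hx)
          rwa [comp, if_pos hy] at hc
        rw [hBe, hy, mul_zero]
        constructor
        · intro hc; exact absurd hc (st_self' _ hx)
        · intro hc; exact absurd hc (by decide)
      · rw [hBY.2 e hy]
  · -- (iii) forward
    rintro ⟨hAX, B, hB, hd⟩
    rw [hfd, dIn_topes hcom hsimple hA hB.1] at hd
    have hseq : sep A B = sep X Y :=
      (Finset.eq_of_subset_of_card_le (sep_subset_faceTopes hAX hB) hd.le).symm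
    refine ⟨hA, fun e he => ?_⟩
    by_cases hx : X e = 0
    · have hy : Y e ≠ 0 := by
        rw [comp, if_pos hx] at he; exact he
      have hnot : e ∉ sep A B := by
        rw [hseq, mem_sep, hx, zero_mul]; decide
      have hAB : A e = B e :=
        st_eq _ _ (hA.2 e) (hB.1.2 e) fun hc => hnot (mem_sep.2 hc)
      rw [comp, if_pos hx, hAB]
      exact hB.2 e hy
    · rw [comp, if_neg hx]
      exact hAX.2 e hx
  · -- (iii) backward
    intro hA'
    have hAX : A ∈ faceTopes L X := by
      refine ⟨hA, fun e hx => ?_⟩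
      have hc := hA'.2 e (by rw [comp, if_neg hx]; exact hx)
      rwa [comp, if_neg hx] at hc
    refine ⟨hAX, comp Y A, faceTopes_comp hcom hY hA, ?_⟩
    rw [hfd, dIn_topes hcom hsimple hA (faceTopes_comp hcom hY hA).1]
    congr 1
    ext e
    simp only [mem_sep, comp]
    by_cases hy : Y e = 0
    · simp only [if_pos hy, hy, mul_zero]
      constructor
      · intro hc; exact absurd hc (st_self' _ (hA.2 e))
      · intro hc; exact absurd hc (by decide)
    · simp only [if_neg hy]
      by_cases hx : X e = 0
      · have hAe : A e = Y e := by
          have hc := hA'.2 e (by rw [comp, if_pos hx]; exact hy)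
          rwa [comp, if_pos hx] at hc
        rw [hAe, hx, zero_mul]
        constructor
        · intro hc; exact absurd hc (st_self' _ hy)
        · intro hc; exact absurd hc (by decide)
      · rw [hAX.2 e hx]
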